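/- Let n ≥ 4 be even and let M be the (n+1)×(n+1) matrix over ℚ with rows and columns indexed by {1,…,n+1} defined by: M_{ij} = 2·min(i,j) if i, j ≤ n−1; M_{i,n} = M_{i,n+1} = M_{n,i} = M_{n+1,i} = i for i ≤ n−1; and M_{n,n} = M_{n,n+1} = M_{n+1,n} = M_{n+1,n+1} = n/2. Then the kernel {v ∈ ℚ^{n+1} : M·v = 0} is exactly the one-dimensional span of the vector e_n − e_{n+1}, where e_i denotes the i-th standard basis vector. -/

import Mathlib

private def wA (m : ℕ) (v : Fin (m + 3) → ℚ) (j : ℕ) : ℚ :=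
  if h : j < m + 3 then v ⟨j, h⟩ else 0

private lemma wA_lt (m : ℕ) (v : Fin (m + 3) → ℚ) (j : ℕ) (h : j < m + 3) :
    wA m v j = v ⟨j, h⟩ := dif_pos h

/-- The purely combinatorial core: from the row equations, the first `m+1`
coordinates vanish and the last two are opposite. -/
private lemma seqAux (m : ℕ) (w : ℕ → ℚ)
    (hE : ∀ i ≤ m, ∑ j ∈ Finset.range (m + 1), ((2 * min (i + 1) (j + 1) : ℕ) : ℚ) * w j
        + ((i : ℚ) + 1) * (w (m + 1) + w (m + 2)) = 0)
    (hE' : ∑ j ∈ Finset.range (m + 1), ((j : ℚ) + 1) * w j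
        + ((m : ℚ) + 2) / 2 * (w (m + 1) + w (m + 2)) = 0) :
    (∀ j ≤ m, w j = 0) ∧ w (m + 2) = -w (m + 1) := by
  set s : ℚ := w (m + 1) + w (m + 2) with hs
  have claim : ∀ k ≤ m, 2 * (∑ j ∈ Finset.Ico k (m + 1), w j) + s = 0 := by
    intro k hk
    match k with
    | 0 =>
      have h0 := hE 0 (Nat.zero_le _)
      have h1 : ∑ j ∈ Finset.range (m + 1), ((2 * min (0 + 1) (j + 1) : ℕ) : ℚ) * w j
          = 2 * ∑ j ∈ Finset.range (m + 1), w j := by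
        rw [Finset.mul_sum]
        refine Finset.sum_congr rfl fun j _ => ?_
        have : min (0 + 1) (j + 1) = 1 := by omega
        rw [this]; push_cast; ring
      rw [h1] at h0
      rw [← Finset.range_eq_Ico]
      push_cast at h0
      linarith
    | (k' + 1) =>
      have h1 := hE k' (by omega)
      have h2 := hE (k' + 1) hk
      have hsum : ∑ j ∈ Finset.range (m + 1),
          (((2 * min (k' + 1 + 1) (j + 1) : ℕ) : ℚ) - ((2 * min (k' + 1) (j + 1) : ℕ) : ℚ)) * w j
          = 2 * ∑ j ∈ Finset.Ico (k' + 1) (m + 1), w j := by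
        rw [Finset.mul_sum]
        rw [show Finset.Ico (k' + 1) (m + 1)
            = (Finset.range (m + 1)).filter (fun j => k' + 1 ≤ j) from by
          ext x; simp only [Finset.mem_filter, Finset.mem_Ico, Finset.mem_range]; omega]
        rw [Finset.sum_filter]
        refine Finset.sum_congr rfl fun j _ => ?_
        by_cases h : k' + 1 ≤ j
        · rw [if_pos h]
          have e1 : min (k' + 1 + 1) (j + 1) = k' + 2 := by omega
          have e2 : min (k' + 1) (j + 1) = k' + 1 := by omega
          rw [e1, e2]; push_cast; ring
        · rw [if_neg h]
          have e1 : min (k' + 1 + 1) (j + 1) = j + 1 := by omega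
          have e2 : min (k' + 1) (j + 1) = j + 1 := by omega
          rw [e1, e2]; ring
      have expand : ∑ j ∈ Finset.range (m + 1),
          (((2 * min (k' + 1 + 1) (j + 1) : ℕ) : ℚ) - ((2 * min (k' + 1) (j + 1) : ℕ) : ℚ)) * w j
          = ∑ j ∈ Finset.range (m + 1), ((2 * min (k' + 1 + 1) (j + 1) : ℕ) : ℚ) * w j
          - ∑ j ∈ Finset.range (m + 1), ((2 * min (k' + 1) (j + 1) : ℕ) : ℚ) * w j := by
        rw [← Finset.sum_sub_distrib]
        refine Finset.sum_congr rfl fun j _ => ?_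
        ring
      have key : (2 : ℚ) * ∑ j ∈ Finset.Ico (k' + 1) (m + 1), w j + s = 0 := by
        rw [← hsum, expand]
        push_cast at h1 h2 ⊢
        linear_combination h2 - h1
      exact key
  have hw0 : ∀ j, j < m → w j = 0 := by
    intro j hj
    have c1 := claim j (le_of_lt hj)
    have c2 := claim (j + 1) hj
    rw [Finset.sum_eq_sum_Ico_succ_bot (by omega) w] at c1
    linarith
  have hwm : 2 * w m + s = 0 := by
    have c := claim m le_rfl
    rw [show Finset.Ico m (m + 1) = {m} from by
      ext x; simp only [Finset.mem_Ico, Finset.mem_singleton]; omega,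
      Finset.sum_singleton] at c
    exact c
  have hE'' : ((m : ℚ) + 1) * w m + ((m : ℚ) + 2) / 2 * s = 0 := by
    have h := hE'
    rw [Finset.sum_range_succ] at h
    have hz : ∑ j ∈ Finset.range m, ((j : ℚ) + 1) * w j = 0 :=
      Finset.sum_eq_zero fun j hj => by
        rw [hw0 j (Finset.mem_range.mp hj)]; ring
    rw [hz] at h
    linarith
  have hs0 : s = 0 := by linear_combination 2 * hE'' - ((m : ℚ) + 1) * hwm
  have hwm0 : w m = 0 := by linarith
  constructor
  · intro j hj
    rcases lt_or_eq_of_le hj with h | h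
    · exact hw0 j h
    · rw [h]; exact hwm0
  · have : w (m + 1) + w (m + 2) = 0 := by rw [← hs]; exact hs0
    linarith

private lemma kerAux (m : ℕ) (M : Matrix (Fin (m + 3)) (Fin (m + 3)) ℚ)
    (hM : ∀ i j : Fin (m + 3), M i j =
      if (i : ℕ) + 1 ≤ m + 1 ∧ (j : ℕ) + 1 ≤ m + 1 then
        ((2 * min ((i : ℕ) + 1) ((j : ℕ) + 1) : ℕ) : ℚ)
      else if (i : ℕ) + 1 ≤ m + 1 then (((i : ℕ) + 1 : ℕ) : ℚ)
      else if (j : ℕ) + 1 ≤ m + 1 then (((j : ℕ) + 1 : ℕ) : ℚ)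
      else ((m + 2 : ℕ) : ℚ) / 2)
    (v : Fin (m + 3) → ℚ) (hv : M.mulVec v = 0) :
    v = v ⟨m + 1, by omega⟩ •
      (Pi.single (⟨m + 1, by omega⟩ : Fin (m + 3)) (1 : ℚ)
        - Pi.single (⟨m + 2, by omega⟩ : Fin (m + 3)) (1 : ℚ)) := by
  classical
  have hrow : ∀ i : Fin (m + 3), ∑ j ∈ Finset.range (m + 3),
      (if (i : ℕ) + 1 ≤ m + 1 ∧ j + 1 ≤ m + 1 then
        ((2 * min ((i : ℕ) + 1) (j + 1) : ℕ) : ℚ)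
      else if (i : ℕ) + 1 ≤ m + 1 then (((i : ℕ) + 1 : ℕ) : ℚ)
      else if j + 1 ≤ m + 1 then ((j + 1 : ℕ) : ℚ)
      else ((m + 2 : ℕ) : ℚ) / 2) * wA m v j = 0 := by
    intro i
    have h0 : M.mulVec v i = 0 := by rw [hv]; rfl
    rw [Matrix.mulVec, dotProduct] at h0
    rw [← h0]
    rw [← Fin.sum_univ_eq_sum_range (fun j =>
      (if (i : ℕ) + 1 ≤ m + 1 ∧ j + 1 ≤ m + 1 then
        ((2 * min ((i : ℕ) + 1) (j + 1) : ℕ) : ℚ)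
      else if (i : ℕ) + 1 ≤ m + 1 then (((i : ℕ) + 1 : ℕ) : ℚ)
      else if j + 1 ≤ m + 1 then ((j + 1 : ℕ) : ℚ)
      else ((m + 2 : ℕ) : ℚ) / 2) * wA m v j) (m + 3)]
    refine Finset.sum_congr rfl fun j _ => ?_
    rw [hM i j, wA_lt m v j.1 j.2]
  have hE : ∀ i ≤ m, ∑ j ∈ Finset.range (m + 1), ((2 * min (i + 1) (j + 1) : ℕ) : ℚ) * wA m v j
      + ((i : ℚ) + 1) * (wA m v (m + 1) + wA m v (m + 2)) = 0 := by
    intro i hi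
    have h := hrow ⟨i, by omega⟩
    rw [Finset.sum_range_succ, Finset.sum_range_succ] at h
    simp only [Fin.val_mk] at h
    rw [if_neg (by omega), if_pos (by omega), if_neg (by omega), if_pos (by omega)] at h
    have hsum : ∑ j ∈ Finset.range (m + 1),
        (if i + 1 ≤ m + 1 ∧ j + 1 ≤ m + 1 then ((2 * min (i + 1) (j + 1) : ℕ) : ℚ)
          else if i + 1 ≤ m + 1 then ((i + 1 : ℕ) : ℚ)
          else if j + 1 ≤ m + 1 then ((j + 1 : ℕ) : ℚ)
          else ((m + 2 : ℕ) : ℚ) / 2) * wA m v j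
        = ∑ j ∈ Finset.range (m + 1), ((2 * min (i + 1) (j + 1) : ℕ) : ℚ) * wA m v j := by
      refine Finset.sum_congr rfl fun j hj => ?_
      rw [if_pos ⟨by omega, by have := Finset.mem_range.mp hj; omega⟩]
    rw [hsum] at h
    push_cast at h ⊢
    linear_combination h
  have hE' : ∑ j ∈ Finset.range (m + 1), ((j : ℚ) + 1) * wA m v j
      + ((m : ℚ) + 2) / 2 * (wA m v (m + 1) + wA m v (m + 2)) = 0 := by
    have h := hrow ⟨m + 1, by omega⟩
    rw [Finset.sum_range_succ, Finset.sum_range_succ] at h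
    simp only [Fin.val_mk] at h
    rw [if_neg (by omega), if_neg (by omega), if_neg (by omega), if_neg (by omega),
      if_neg (by omega), if_neg (by omega)] at h
    have hsum : ∑ j ∈ Finset.range (m + 1),
        (if m + 1 + 1 ≤ m + 1 ∧ j + 1 ≤ m + 1 then ((2 * min (m + 1 + 1) (j + 1) : ℕ) : ℚ)
          else if m + 1 + 1 ≤ m + 1 then ((m + 1 + 1 : ℕ) : ℚ)
          else if j + 1 ≤ m + 1 then ((j + 1 : ℕ) : ℚ)
          else ((m + 2 : ℕ) : ℚ) / 2) * wA m v j
        = ∑ j ∈ Finset.range (m + 1), ((j : ℚ) + 1) * wA m v j := by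
      refine Finset.sum_congr rfl fun j hj => ?_
      rw [if_neg (by omega), if_neg (by omega),
        if_pos (by have := Finset.mem_range.mp hj; omega)]
      push_cast; ring
    rw [hsum] at h
    push_cast at h ⊢
    linear_combination h
  obtain ⟨hw, hlast⟩ := seqAux m (wA m v) hE hE'
  funext i
  have hva : wA m v (m + 1) = v ⟨m + 1, by omega⟩ := wA_lt m v (m + 1) (by omega)
  have hvb : wA m v (m + 2) = v ⟨m + 2, by omega⟩ := wA_lt m v (m + 2) (by omega)
  rcases lt_trichotomy (i : ℕ) (m + 1) with h | h | h
  · have h1 : v i = 0 := by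
      have := hw i (by omega)
      rwa [wA_lt m v i i.isLt, Fin.eta] at this
    have h2 : i ≠ (⟨m + 1, by omega⟩ : Fin (m + 3)) := Fin.ne_of_val_ne (by simp only [Fin.val_mk]; omega)
    have h3 : i ≠ (⟨m + 2, by omega⟩ : Fin (m + 3)) := Fin.ne_of_val_ne (by simp only [Fin.val_mk]; omega)
    simp [Pi.single_eq_of_ne h2, Pi.single_eq_of_ne h3, h1]
  · have h1 : i = (⟨m + 1, by omega⟩ : Fin (m + 3)) := Fin.ext h
    have h3 : (⟨m + 1, by omega⟩ : Fin (m + 3)) ≠ (⟨m + 2, by omega⟩ : Fin (m + 3)) :=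
      Fin.ne_of_val_ne (by simp only [Fin.val_mk]; omega)
    rw [h1]
    simp [Pi.single_eq_same, Pi.single_eq_of_ne h3]
  · have h1 : i = (⟨m + 2, by omega⟩ : Fin (m + 3)) := Fin.ext (by simp only [Fin.val_mk]; omega)
    have h3 : (⟨m + 2, by omega⟩ : Fin (m + 3)) ≠ (⟨m + 1, by omega⟩ : Fin (m + 3)) :=
      Fin.ne_of_val_ne (by simp only [Fin.val_mk]; omega)
    rw [h1]
    have h4 : v (⟨m + 2, by omega⟩ : Fin (m + 3)) = -v ⟨m + 1, by omega⟩ := by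
      rw [← hva, ← hvb]; exact hlast
    simp [Pi.single_eq_same, Pi.single_eq_of_ne h3, h4]

/-- For even `n ≥ 4`, the matrix `M` (with rows and columns indexed by `{1, …, n+1}`,
realized as `Fin (n+1)` with `i ↦ i+1`) given by `M i j = 2·min i j` for `i, j ≤ n−1`,
`M i n = M i (n+1) = M n i = M (n+1) i = i` for `i ≤ n−1`, and `M i j = n/2` for
`i, j ∈ {n, n+1}`, has kernel exactly the one-dimensional span of `eₙ − e_{n+1}`. -/
theorem kernel_hilbert_matrix_Dn_even
    (n : ℕ) (hn : 4 ≤ n) (hne : Even n)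
    (M : Matrix (Fin (n + 1)) (Fin (n + 1)) ℚ)
    (hM : ∀ i j : Fin (n + 1), M i j =
      if (i : ℕ) + 1 ≤ n - 1 ∧ (j : ℕ) + 1 ≤ n - 1 then
        ((2 * min ((i : ℕ) + 1) ((j : ℕ) + 1) : ℕ) : ℚ)
      else if (i : ℕ) + 1 ≤ n - 1 then (((i : ℕ) + 1 : ℕ) : ℚ)
      else if (j : ℕ) + 1 ≤ n - 1 then (((j : ℕ) + 1 : ℕ) : ℚ)
      else (n : ℚ) / 2) :
    LinearMap.ker M.mulVecLin =
      Submodule.span ℚ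
        {Pi.single (⟨n - 1, by omega⟩ : Fin (n + 1)) (1 : ℚ)
          - Pi.single (⟨n, by omega⟩ : Fin (n + 1)) (1 : ℚ)} ∧
    Module.finrank ℚ (LinearMap.ker M.mulVecLin) = 1 := by
  obtain ⟨m, rfl⟩ : ∃ m, n = m + 2 := ⟨n - 2, by omega⟩
  have hM' : ∀ i j : Fin (m + 3), M i j =
      if (i : ℕ) + 1 ≤ m + 1 ∧ (j : ℕ) + 1 ≤ m + 1 then
        ((2 * min ((i : ℕ) + 1) ((j : ℕ) + 1) : ℕ) : ℚ)
      else if (i : ℕ) + 1 ≤ m + 1 then (((i : ℕ) + 1 : ℕ) : ℚ)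
      else if (j : ℕ) + 1 ≤ m + 1 then (((j : ℕ) + 1 : ℕ) : ℚ)
      else ((m + 2 : ℕ) : ℚ) / 2 := fun i j => hM i j
  have hker : LinearMap.ker M.mulVecLin =
      Submodule.span ℚ
        {Pi.single (⟨m + 1, by omega⟩ : Fin (m + 3)) (1 : ℚ)
          - Pi.single (⟨m + 2, by omega⟩ : Fin (m + 3)) (1 : ℚ)} := by
    apply le_antisymm
    · intro v hv
      have hv' : M.mulVec v = 0 := hv
      rw [Submodule.mem_span_singleton]
      exact ⟨v ⟨m + 1, by omega⟩, (kerAux m M hM' v hv').symm⟩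
    · rw [Submodule.span_le, Set.singleton_subset_iff]
      have : M.mulVec (Pi.single (⟨m + 1, by omega⟩ : Fin (m + 3)) (1 : ℚ)
          - Pi.single (⟨m + 2, by omega⟩ : Fin (m + 3)) (1 : ℚ)) = 0 := by
        have hsub : M.mulVec (Pi.single (⟨m + 1, by omega⟩ : Fin (m + 3)) (1 : ℚ)
            - Pi.single (⟨m + 2, by omega⟩ : Fin (m + 3)) (1 : ℚ))
            = M.mulVec (Pi.single (⟨m + 1, by omega⟩ : Fin (m + 3)) (1 : ℚ))
            - M.mulVec (Pi.single (⟨m + 2, by omega⟩ : Fin (m + 3)) (1 : ℚ)) := by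
          rw [Matrix.mulVec_sub]
        rw [hsub, Matrix.mulVec_single, Matrix.mulVec_single]
        funext i
        simp only [Pi.sub_apply, Pi.zero_apply, mul_one, MulOpposite.op_one, one_smul, Matrix.col_apply]
        rw [hM' i ⟨m + 1, by omega⟩, hM' i ⟨m + 2, by omega⟩]
        simp only [Fin.val_mk]
        have c1 : ¬(m + 1 + 1 ≤ m + 1) := by omega
        have c2 : ¬(m + 2 + 1 ≤ m + 1) := by omega
        by_cases h : (i : ℕ) + 1 ≤ m + 1
        · simp [h, c1, c2]
        · simp [h, c1, c2]
      rw [SetLike.mem_coe, LinearMap.mem_ker, Matrix.mulVecLin_apply]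
      exact this
  have hu0 : ((Pi.single (⟨m + 1, by omega⟩ : Fin (m + 3)) (1 : ℚ)
      - Pi.single (⟨m + 2, by omega⟩ : Fin (m + 3)) (1 : ℚ) : Fin (m + 3) → ℚ)) ≠ 0 := by
    intro h
    have h2 : (⟨m + 1, by omega⟩ : Fin (m + 3)) ≠ (⟨m + 2, by omega⟩ : Fin (m + 3)) :=
      Fin.ne_of_val_ne (by simp only [Fin.val_mk]; omega)
    have := congrFun h (⟨m + 1, by omega⟩ : Fin (m + 3))
    simp [Pi.single_eq_same, Pi.single_eq_of_ne h2] at this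
  exact ⟨hker, by rw [hker, finrank_span_singleton hu0]⟩
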